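/- Let n_2 = ⌊(N(d−1)−1)/2⌋ and let (t_k)_{k=0}^{n_2} be arbitrary complex numbers. Then U_(t) = Σ_{k,l=0}^{n_2} t_k t̄_l |R̃_{N,d;k+l+1}⟩⟨R̃_{N,d;k+l+1}| is an entanglement witness for the D-symmetric system: U_(t) is Hermitian, P_D U_(t) P_D = U_(t), and Tr(U_(t) σ) ≥ 0 for every pure fully separable D-symmetric state σ = (|ξ⟩⟨ξ|)^{⊗N} with σ = P_D σ P_D and ξ ∈ ℂ^d a unit vector. -/

import Mathlib

open scoped BigOperators ComplexConjugate ComplexOrder Matrix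
noncomputable section
open MeasureTheory

namespace DSym

/-- Index set of the computational basis of `(ℂ^d)^{⊗N}`. -/
abbrev Idx (d N : ℕ) := Fin N → Fin d

/-- `|i| = i_1 + ⋯ + i_N`. -/
def wsum {d N : ℕ} (i : Idx d N) : ℕ := ∑ j, (i j : ℕ)

/-- `C(N,k)_d = #{i ∈ {0,…,d−1}^N : |i| = k}`. -/
def Ccount (d N k : ℕ) : ℕ := (Finset.univ.filter (fun i : Idx d N => wsum i = k)).card

/-- The D-symmetrizator `P_D`. -/
def PD (d N : ℕ) : Matrix (Idx d N) (Idx d N) ℂ :=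
  Matrix.of fun i j => if wsum i = wsum j then ((Ccount d N (wsum j) : ℂ))⁻¹ else 0

/-- The symmetrizator `P_S`. -/
def PS (d N : ℕ) : Matrix (Idx d N) (Idx d N) ℂ :=
  Matrix.of fun i j =>
    ((N.factorial : ℂ))⁻¹ *
      ((Finset.univ.filter (fun σ : Equiv.Perm (Fin N) => i = fun k => j (σ k))).card : ℂ)

/-- The product state `|ξ^1⟩⟨ξ^1| ⊗ ⋯ ⊗ |ξ^N⟩⟨ξ^N|` as a matrix. -/
def prodProj {d N : ℕ} (ξ : Fin N → (Fin d → ℂ)) : Matrix (Idx d N) (Idx d N) ℂ :=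
  Matrix.of fun i i' => ∏ j, ξ j (i j) * conj (ξ j (i' j))

/-- Full separability of a multipartite state. -/
def FullySep {d N : ℕ} (ρ : Matrix (Idx d N) (Idx d N) ℂ) : Prop :=
  ∃ (n : ℕ) (lam : Fin n → ℝ) (ξ : Fin n → Fin N → (Fin d → ℂ)),
    (∀ α, 0 < lam α) ∧ (∀ α j, ∑ x, Complex.normSq (ξ α j x) = 1) ∧
      ρ = ∑ α, (lam α : ℂ) • prodProj (ξ α)

/-- The restricted Dicke vector `|R_{N,d;k}⟩`. -/
def Rvec (d N k : ℕ) : Idx d N → ℂ := fun i => if wsum i = k then 1 else 0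

/-- The rank-one operator `|R_{N,d;k}⟩⟨R_{N,d;k}|`. -/
def RProj (d N k : ℕ) : Matrix (Idx d N) (Idx d N) ℂ :=
  Matrix.vecMulVec (Rvec d N k) (star (Rvec d N k))

/-- Diagonal restricted Dicke state with coefficients `p`. -/
def dickeDiag (d N : ℕ) (p : ℕ → ℝ) : Matrix (Idx d N) (Idx d N) ℂ :=
  ∑ k ∈ Finset.range (N * (d - 1) + 1), (p k : ℂ) • RProj d N k

/-- Partial transposition of the first `m` tensor factors (entrywise). -/
def Gamma {d N : ℕ} (m : ℕ) (ρ : Matrix (Idx d N) (Idx d N) ℂ) :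
    Matrix (Idx d N) (Idx d N) ℂ :=
  Matrix.of fun i j =>
    ρ (fun k => if (k : ℕ) < m then j k else i k) (fun k => if (k : ℕ) < m then i k else j k)

/-- D-symmetry of a state: `ρ = P_D ρ P_D`. -/
def IsDSymm {d N : ℕ} (ρ : Matrix (Idx d N) (Idx d N) ℂ) : Prop :=
  ρ = PD d N * ρ * PD d N

/-- A pure fully separable D-symmetric state `σ = (|ξ⟩⟨ξ|)^{⊗N}`, `ξ` a unit vector. -/
def PureDSymmProd {d N : ℕ} (σ : Matrix (Idx d N) (Idx d N) ℂ) : Prop :=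
  ∃ ξ : Fin d → ℂ,
    (∑ x, Complex.normSq (ξ x) = 1) ∧ σ = prodProj (fun _ : Fin N => ξ) ∧ IsDSymm σ

/-- Entanglement witness for the D-symmetric system. -/
def IsDWitness {d N : ℕ} (W : Matrix (Idx d N) (Idx d N) ℂ) : Prop :=
  W.IsHermitian ∧ W = PD d N * W * PD d N ∧
    ∀ σ : Matrix (Idx d N) (Idx d N) ℂ, PureDSymmProd σ → 0 ≤ (W * σ).trace

/-- The dual restricted Dicke vector. -/
def Rtilde (d N k : ℕ) : Idx d N → ℂ := ((Ccount d N k : ℂ))⁻¹ • Rvec d N k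

/-- Solution of the generalized moment problem on `[0,∞)`. -/
def IsGenMomentSolution (n : ℕ) (p : ℕ → ℝ) : Prop :=
  ∃ (σ : Measure ℝ) (M : ℝ), IsFiniteMeasure σ ∧ σ {x | x < 0} = 0 ∧
    (∀ k ≤ n, Integrable (fun t => t ^ k) σ) ∧ 0 ≤ M ∧
    (∀ k < n, p k = ∫ t, t ^ k ∂σ) ∧ p n = (∫ t, t ^ n ∂σ) + M

/-- Solution of the strict moment problem on `[0,∞)`. -/
def IsStrictMomentSolution (n : ℕ) (p : ℕ → ℝ) : Prop :=
  ∃ σ : Measure ℝ, IsFiniteMeasure σ ∧ σ {x | x < 0} = 0 ∧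
    (∀ k ≤ n, Integrable (fun t => t ^ k) σ) ∧ (∀ k ≤ n, p k = ∫ t, t ^ k ∂σ)


/-- The normalization constant `C_z = (Σ_{i=0}^{d−1} |z|^{2i})^{−1/2}`. -/
def Cz (d : ℕ) (z : ℂ) : ℝ := (∑ j ∈ Finset.range d, ‖z‖ ^ (2 * j)) ^ (-(1/2 : ℝ))

/-- The vector `ζ_z = C_z Σ_{i=0}^{d−1} z^i |i⟩`. -/
def zeta (d : ℕ) (z : ℂ) : Fin d → ℂ := fun i => (Cz d z : ℂ) * z ^ (i : ℕ)

/-- The basis vector `|d−1⟩`. -/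
def topVec (d : ℕ) : Fin d → ℂ := fun x => if (x : ℕ) = d - 1 then 1 else 0

/-- Sum of the first `m` coordinates of a tuple. -/
def wsumFirst {d N : ℕ} (m : ℕ) (i : Idx d N) : ℕ :=
  ∑ j ∈ Finset.univ.filter (fun j : Fin N => (j : ℕ) < m), (i j : ℕ)

/-- Sum of the last `N − m` coordinates of a tuple. -/
def wsumLast {d N : ℕ} (m : ℕ) (i : Idx d N) : ℕ :=
  ∑ j ∈ Finset.univ.filter (fun j : Fin N => m ≤ (j : ℕ)), (i j : ℕ)

/-- The vector `|R_{m,d;a}⟩ ⊗ |R_{N−m,d;b}⟩`, viewed inside `(ℂ^d)^{⊗N}`. -/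
def splitVec (d N m : ℕ) (a b : ℤ) : Idx d N → ℂ :=
  fun i => if (wsumFirst m i : ℤ) = a ∧ (wsumLast m i : ℤ) = b then 1 else 0

/-- The operator `A_s` from the decomposition of `Γ_m(ρ)`. -/
def Amat (d N m : ℕ) (p : ℕ → ℝ) (s : ℤ) : Matrix (Idx d N) (Idx d N) ℂ :=
  ∑ k ∈ Finset.Icc (max 0 (-s)) (min ((m : ℤ) * ((d : ℤ) - 1)) ((((N : ℤ) - (m : ℤ)) * ((d : ℤ) - 1)) - s)),
  ∑ l ∈ Finset.Icc (max 0 (-s)) (min ((m : ℤ) * ((d : ℤ) - 1)) ((((N : ℤ) - (m : ℤ)) * ((d : ℤ) - 1)) - s)),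
    (p (k + l + s).toNat : ℂ) •
      Matrix.vecMulVec (splitVec d N m k (k + s)) (star (splitVec d N m l (l + s)))

/-- The permutation unitary `F_σ`, `F_σ|ξ_1,…,ξ_N⟩ = |ξ_{σ⁻¹(1)},…,ξ_{σ⁻¹(N)}⟩`. -/
def Fmat (d N : ℕ) (σ : Equiv.Perm (Fin N)) : Matrix (Idx d N) (Idx d N) ℂ :=
  Matrix.of fun x i => if x = fun k => i (σ.symm k) then 1 else 0

/-- Partial transposition with respect to the binary string `b`. -/
def partialT {d N : ℕ} (b : Fin N → Bool) (ρ : Matrix (Idx d N) (Idx d N) ℂ) :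
    Matrix (Idx d N) (Idx d N) ℂ :=
  Matrix.of fun i j => ρ (fun k => if b k then j k else i k) (fun k => if b k then i k else j k)

end DSym
end


namespace DSym

-- ===== auxiliary lemmas =====

lemma star_Rtilde (d N m : ℕ) : star (Rtilde d N m) = Rtilde d N m := by
  funext i
  simp only [Rtilde, Rvec, Pi.star_apply, Pi.smul_apply, smul_eq_mul]
  split <;> simp

lemma sum_Rtilde_mul {d N : ℕ} (m : ℕ) (f : Idx d N → ℂ) :
    ∑ i, Rtilde d N m i * f i
      = ((Ccount d N m : ℂ))⁻¹ * ∑ i ∈ Finset.univ.filter (fun i : Idx d N => wsum i = m), f i := by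
  rw [Finset.mul_sum, Finset.sum_filter]
  refine Finset.sum_congr rfl fun i _ => ?_
  simp only [Rtilde, Rvec, Pi.smul_apply, smul_eq_mul]
  split <;> simp

lemma Ccount_ne_zero {d N : ℕ} (i : Idx d N) : (Ccount d N (wsum i) : ℂ) ≠ 0 := by
  have : i ∈ Finset.univ.filter (fun j : Idx d N => wsum j = wsum i) := by simp
  have h := Finset.card_ne_zero_of_mem this
  exact_mod_cast h

lemma PD_mulVec_Rtilde (d N m : ℕ) : PD d N *ᵥ Rtilde d N m = Rtilde d N m := by
  funext i
  show ∑ j, PD d N i j * Rtilde d N m j = _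
  by_cases h : wsum i = m
  · have hC : (Ccount d N m : ℂ) ≠ 0 := h ▸ Ccount_ne_zero i
    have : ∀ j : Idx d N, PD d N i j * Rtilde d N m j
        = if wsum j = m then (Ccount d N m : ℂ)⁻¹ * (Ccount d N m : ℂ)⁻¹ else 0 := by
      intro j
      simp only [PD, Matrix.of_apply, Rtilde, Rvec, Pi.smul_apply, smul_eq_mul]
      by_cases hj : wsum j = m
      · simp [hj, h, mul_comm]
      · have : ¬ (wsum i = wsum j) := by rw [h]; exact fun hh => hj hh.symm
        simp [hj, this]
    rw [Finset.sum_congr rfl (fun j _ => this j), ← Finset.sum_filter,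
      Finset.sum_const, nsmul_eq_mul]
    show (Ccount d N m : ℂ) * _ = _
    have : Rtilde d N m i = (Ccount d N m : ℂ)⁻¹ := by simp [Rtilde, Rvec, h]
    rw [this]
    field_simp
  · have : ∀ j : Idx d N, PD d N i j * Rtilde d N m j = 0 := by
      intro j
      simp only [PD, Matrix.of_apply, Rtilde, Rvec, Pi.smul_apply, smul_eq_mul]
      by_cases hj : wsum j = m
      · have : ¬ (wsum i = wsum j) := fun hh => h (hj ▸ hh)
        simp [this]
      · simp [hj]
    rw [Finset.sum_congr rfl (fun j _ => this j), Finset.sum_const, smul_zero]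
    simp [Rtilde, Rvec, h]

lemma Rtilde_vecMul_PD (d N m : ℕ) : Rtilde d N m ᵥ* PD d N = Rtilde d N m := by
  funext j
  show ∑ i, Rtilde d N m i * PD d N i j = _
  by_cases h : wsum j = m
  · have hC : (Ccount d N m : ℂ) ≠ 0 := h ▸ Ccount_ne_zero j
    have : ∀ i : Idx d N, Rtilde d N m i * PD d N i j
        = if wsum i = m then (Ccount d N m : ℂ)⁻¹ * (Ccount d N m : ℂ)⁻¹ else 0 := by
      intro i
      simp only [PD, Matrix.of_apply, Rtilde, Rvec, Pi.smul_apply, smul_eq_mul]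
      by_cases hi : wsum i = m
      · simp [hi, h, hi.trans h.symm]
      · have : ¬ (wsum i = wsum j) := by rw [h]; exact hi
        simp [hi, this]
    rw [Finset.sum_congr rfl (fun i _ => this i), ← Finset.sum_filter,
      Finset.sum_const, nsmul_eq_mul]
    show (Ccount d N m : ℂ) * _ = _
    have hr : Rtilde d N m j = (Ccount d N m : ℂ)⁻¹ := by simp [Rtilde, Rvec, h]
    rw [hr]; field_simp
  · have : ∀ i : Idx d N, Rtilde d N m i * PD d N i j = 0 := by
      intro i
      simp only [PD, Matrix.of_apply, Rtilde, Rvec, Pi.smul_apply, smul_eq_mul]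
      by_cases hi : wsum i = m
      · have : ¬ (wsum i = wsum j) := by rw [hi]; exact fun hh => h hh.symm
        simp [this]
      · simp [hi]
    rw [Finset.sum_congr rfl (fun i _ => this i), Finset.sum_const, smul_zero]
    simp [Rtilde, Rvec, h]

lemma mul_vecMulVec' {n : Type*} [Fintype n] [DecidableEq n]
    (A : Matrix n n ℂ) (v w : n → ℂ) :
    A * Matrix.vecMulVec v w = Matrix.vecMulVec (A *ᵥ v) w := by
  ext i j
  simp [Matrix.mul_apply, Matrix.vecMulVec_apply, Matrix.mulVec, dotProduct,
    Finset.sum_mul, mul_assoc]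

lemma vecMulVec_mul' {n : Type*} [Fintype n] [DecidableEq n]
    (A : Matrix n n ℂ) (v w : n → ℂ) :
    Matrix.vecMulVec v w * A = Matrix.vecMulVec v (w ᵥ* A) := by
  ext i j
  simp only [Matrix.mul_apply, Matrix.vecMulVec_apply, Matrix.vecMul, dotProduct,
    Finset.mul_sum]
  exact Finset.sum_congr rfl fun x _ => by ring

lemma exists_rep (d : ℕ) (hd : 1 ≤ d) :
    ∀ (N m : ℕ), m ≤ N * (d - 1) → ∃ i : Fin N → Fin d, ∑ j, ((i j : ℕ)) = m := by
  intro N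
  induction N with
  | zero => intro m hm; simp at hm; exact ⟨fun j => j.elim0, by simp [hm]⟩
  | succ n ih =>
    intro m hm
    have hx : min m (d - 1) < d := by omega
    have hrest : m - min m (d - 1) ≤ n * (d - 1) := by
      rcases le_or_gt m (d-1) with h | h
      · simp [min_eq_left h]
      · have : min m (d-1) = d - 1 := min_eq_right (le_of_lt h)
        rw [this]
        have := hm
        rw [Nat.succ_mul] at this
        omega
    obtain ⟨i', hi'⟩ := ih (m - min m (d - 1)) hrest
    refine ⟨Fin.cons ⟨min m (d - 1), hx⟩ i', ?_⟩
    rw [Fin.sum_univ_succ]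
    simp only [Fin.cons_zero, Fin.cons_succ, hi']
    omega

lemma prod_trip {M : Type*} [CommMonoid M] {N : ℕ} (hN : 2 ≤ N) (g : Fin N → M) (a b c : M)
    (h0 : ∀ j : Fin N, (j : ℕ) = 0 → g j = a) (h1 : ∀ j : Fin N, (j : ℕ) = 1 → g j = b)
    (h2 : ∀ j : Fin N, (j : ℕ) ≠ 0 → (j : ℕ) ≠ 1 → g j = c) :
    ∏ j, g j = a * b * c ^ (N - 2) := by
  have h0N : (0 : ℕ) < N := by omega
  have h1N : (1 : ℕ) < N := by omega
  set j0 : Fin N := ⟨0, h0N⟩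
  set j1 : Fin N := ⟨1, h1N⟩
  have hne : j0 ≠ j1 := by simp [j0, j1, Fin.ext_iff]
  have hsub : ({j0, j1} : Finset (Fin N)) ⊆ Finset.univ := Finset.subset_univ _
  rw [← Finset.prod_sdiff hsub, Finset.prod_pair hne, h0 j0 rfl, h1 j1 rfl]
  have hcard : (Finset.univ \ ({j0, j1} : Finset (Fin N))).card = N - 2 := by
    rw [Finset.card_sdiff_of_subset hsub, Finset.card_univ, Fintype.card_fin,
      Finset.card_insert_of_notMem (by simp [hne]), Finset.card_singleton]
  have : ∀ j ∈ Finset.univ \ ({j0, j1} : Finset (Fin N)), g j = c := by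
    intro j hj
    simp only [Finset.mem_sdiff, Finset.mem_insert, Finset.mem_singleton] at hj
    refine h2 j ?_ ?_
    · intro h; exact hj.2 (Or.inl (Fin.ext h))
    · intro h; exact hj.2 (Or.inr (Fin.ext h))
  rw [Finset.prod_congr rfl this, Finset.prod_const, hcard, mul_comm]

lemma sum_trip {N : ℕ} (hN : 2 ≤ N) (g : Fin N → ℕ) (a b c : ℕ)
    (h0 : ∀ j : Fin N, (j : ℕ) = 0 → g j = a) (h1 : ∀ j : Fin N, (j : ℕ) = 1 → g j = b)
    (h2 : ∀ j : Fin N, (j : ℕ) ≠ 0 → (j : ℕ) ≠ 1 → g j = c) :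
    ∑ j, g j = a + b + (N - 2) * c := by
  have h0N : (0 : ℕ) < N := by omega
  have h1N : (1 : ℕ) < N := by omega
  set j0 : Fin N := ⟨0, h0N⟩
  set j1 : Fin N := ⟨1, h1N⟩
  have hne : j0 ≠ j1 := by simp [j0, j1, Fin.ext_iff]
  have hsub : ({j0, j1} : Finset (Fin N)) ⊆ Finset.univ := Finset.subset_univ _
  rw [← Finset.sum_sdiff hsub, Finset.sum_pair hne, h0 j0 rfl, h1 j1 rfl]
  have hcard : (Finset.univ \ ({j0, j1} : Finset (Fin N))).card = N - 2 := by
    rw [Finset.card_sdiff_of_subset hsub, Finset.card_univ, Fintype.card_fin,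
      Finset.card_insert_of_notMem (by simp [hne]), Finset.card_singleton]
  have : ∀ j ∈ Finset.univ \ ({j0, j1} : Finset (Fin N)), g j = c := by
    intro j hj
    simp only [Finset.mem_sdiff, Finset.mem_insert, Finset.mem_singleton] at hj
    refine h2 j ?_ ?_
    · intro h; exact hj.2 (Or.inl (Fin.ext h))
    · intro h; exact hj.2 (Or.inr (Fin.ext h))
  rw [Finset.sum_congr rfl this, Finset.sum_const, hcard, smul_eq_mul]
  ring

/-- tuple (a, b, c, c, ..., c) -/
def trip {d N : ℕ} (a b c : Fin d) : Fin N → Fin d :=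
  fun j => if (j : ℕ) = 0 then a else if (j : ℕ) = 1 then b else c

lemma trip_spec {d N : ℕ} (hN : 2 ≤ N) (a b c : Fin d) {M : Type*} [CommMonoid M]
    (f : Fin d → M) : ∏ j, f (trip (N := N) a b c j) = f a * f b * f c ^ (N - 2) := by
  refine prod_trip hN _ _ _ _ ?_ ?_ (fun j hj hj' => by simp [trip, hj, hj']) <;>
    intro j hj <;> simp [trip, hj]

lemma trip_wsum {d N : ℕ} (hN : 2 ≤ N) (a b c : Fin d) :
    ∑ j, ((trip (N := N) a b c j : ℕ)) = (a : ℕ) + b + (N - 2) * c := by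
  refine sum_trip hN _ _ _ _ ?_ ?_ (fun j hj hj' => by simp [trip, hj, hj']) <;>
    intro j hj <;> simp [trip, hj]

/-- `a_m = Σ_{|i|=m} ∏_r ξ(i_r)` -/
noncomputable def aSum (d N : ℕ) (ξ : Fin d → ℂ) (m : ℕ) : ℂ :=
  ∑ j ∈ Finset.univ.filter (fun j : Idx d N => wsum j = m), ∏ r, ξ (j r)

/-- `b_m = C(m)⁻¹ a_m` -/
noncomputable def bVal (d N : ℕ) (ξ : Fin d → ℂ) (m : ℕ) : ℂ := ((Ccount d N m : ℂ))⁻¹ * aSum d N ξ m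

lemma prodProj_apply_eq {d N : ℕ} (ξ : Fin d → ℂ) (j j' : Idx d N) :
    prodProj (fun _ : Fin N => ξ) j j' = (∏ r, ξ (j r)) * conj (∏ r, ξ (j' r)) := by
  simp only [prodProj, Matrix.of_apply, map_prod, Finset.prod_mul_distrib]

lemma conj_bVal_natCast (d N m : ℕ) (ξ : Fin d → ℂ) :
    conj (bVal d N ξ m) = ((Ccount d N m : ℂ))⁻¹ * conj (aSum d N ξ m) := by
  simp [bVal, map_mul, map_inv₀]

lemma sigma_mul_PD {d N : ℕ} (ξ : Fin d → ℂ) (j i' : Idx d N) :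
    (prodProj (fun _ : Fin N => ξ) * PD d N) j i'
      = (∏ r, ξ (j r)) * conj (bVal d N ξ (wsum i')) := by
  rw [Matrix.mul_apply]
  calc ∑ j', prodProj (fun _ : Fin N => ξ) j j' * PD d N j' i'
      = ∑ j', (if wsum j' = wsum i' then
          (∏ r, ξ (j r)) * conj (∏ r, ξ (j' r)) * ((Ccount d N (wsum i') : ℂ))⁻¹ else 0) := by
        refine Finset.sum_congr rfl fun j' _ => ?_
        rw [prodProj_apply_eq]
        simp only [PD, Matrix.of_apply]
        split <;> simp
    _ = ∑ j' ∈ Finset.univ.filter (fun j' : Idx d N => wsum j' = wsum i'),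
          (∏ r, ξ (j r)) * conj (∏ r, ξ (j' r)) * ((Ccount d N (wsum i') : ℂ))⁻¹ := by
        rw [Finset.sum_filter]
    _ = (∏ r, ξ (j r)) * conj (bVal d N ξ (wsum i')) := by
        rw [conj_bVal_natCast, aSum, map_sum]
        simp only [Finset.mul_sum, Finset.sum_mul]
        refine Finset.sum_congr rfl fun j' _ => ?_
        ring

lemma PD_mul_sigma_mul_PD {d N : ℕ} (ξ : Fin d → ℂ) (i i' : Idx d N) :
    (PD d N * prodProj (fun _ : Fin N => ξ) * PD d N) i i'
      = bVal d N ξ (wsum i) * conj (bVal d N ξ (wsum i')) := by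
  rw [Matrix.mul_assoc, Matrix.mul_apply]
  calc ∑ j, PD d N i j * (prodProj (fun _ : Fin N => ξ) * PD d N) j i'
      = ∑ j, (if wsum j = wsum i then
          ((Ccount d N (wsum i) : ℂ))⁻¹ * ((∏ r, ξ (j r)) * conj (bVal d N ξ (wsum i'))) else 0) := by
        refine Finset.sum_congr rfl fun j _ => ?_
        rw [sigma_mul_PD]
        simp only [PD, Matrix.of_apply]
        by_cases h : wsum i = wsum j
        · simp [h, eq_comm]
        · have h' : ¬ wsum j = wsum i := fun hh => h hh.symm
          simp [h, h']
    _ = ∑ j ∈ Finset.univ.filter (fun j : Idx d N => wsum j = wsum i),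
          ((Ccount d N (wsum i) : ℂ))⁻¹ * ((∏ r, ξ (j r)) * conj (bVal d N ξ (wsum i'))) := by
        rw [Finset.sum_filter]
    _ = bVal d N ξ (wsum i) * conj (bVal d N ξ (wsum i')) := by
        conv_rhs => rw [bVal, aSum, mul_assoc, Finset.sum_mul, Finset.mul_sum]

lemma trace_term {d N : ℕ} (m : ℕ) (ξ : Fin d → ℂ) :
    (Matrix.vecMulVec (Rtilde d N m) (star (Rtilde d N m)) * prodProj (fun _ : Fin N => ξ)).trace
      = bVal d N ξ m * conj (bVal d N ξ m) := by
  rw [Matrix.trace]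
  have hdiag : ∀ i : Idx d N,
      (Matrix.vecMulVec (Rtilde d N m) (star (Rtilde d N m)) * prodProj (fun _ : Fin N => ξ)).diag i
        = ∑ j, (Rtilde d N m i * conj (∏ r, ξ (i r))) * (Rtilde d N m j * (∏ r, ξ (j r))) := by
    intro i
    rw [Matrix.diag_apply, Matrix.mul_apply]
    refine Finset.sum_congr rfl fun j _ => ?_
    rw [Matrix.vecMulVec_apply, prodProj_apply_eq]
    simp only [Pi.star_apply, RCLike.star_def]
    have : conj (Rtilde d N m j) = Rtilde d N m j := by
      simp only [Rtilde, Rvec, Pi.smul_apply, smul_eq_mul]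
      split <;> simp
    rw [this]
    ring
  rw [Finset.sum_congr rfl fun i _ => hdiag i, ← Finset.sum_mul_sum]
  have h1 : ∑ i, Rtilde d N m i * conj (∏ r, ξ (i r)) = conj (bVal d N ξ m) := by
    rw [sum_Rtilde_mul, conj_bVal_natCast, aSum, map_sum]
  have h2 : ∑ j, Rtilde d N m j * (∏ r, ξ (j r)) = bVal d N ξ m := by
    rw [sum_Rtilde_mul, bVal, aSum]
  rw [h1, h2, mul_comm]

end DSym


namespace DSym

theorem stmt6 (d N : ℕ) (hd : 2 ≤ d) (hN : 2 ≤ N) (t : ℕ → ℂ)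
    (n2 : ℕ) (hn2 : n2 = (N * (d - 1) - 1) / 2)
    (U : Matrix (Idx d N) (Idx d N) ℂ)
    (hU : U = ∑ k ∈ Finset.range (n2 + 1), ∑ l ∈ Finset.range (n2 + 1),
      (t k * conj (t l)) •
        Matrix.vecMulVec (Rtilde d N (k + l + 1)) (star (Rtilde d N (k + l + 1)))) :
    U.IsHermitian ∧ PD d N * U * PD d N = U ∧
      ∀ σ : Matrix (Idx d N) (Idx d N) ℂ, PureDSymmProd σ → 0 ≤ (U * σ).trace := by
  have hd1 : 1 ≤ d := by omega
  have hd0 : 0 < d := by omega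
  have hMge : 2 ≤ N * (d - 1) := by
    have h1 : 1 ≤ d - 1 := by omega
    calc 2 ≤ N * 1 := by omega
    _ ≤ N * (d - 1) := Nat.mul_le_mul_left N h1
  have h2n2 : 2 * n2 ≤ N * (d - 1) - 1 := by
    rw [hn2]
    have := Nat.div_mul_le_self (N * (d - 1) - 1) 2
    omega
  refine ⟨?_, ?_, ?_⟩
  · -- Hermitian
    show Uᴴ = U
    rw [hU]
    ext i j
    simp only [Matrix.conjTranspose_apply, Matrix.sum_apply, Matrix.smul_apply,
      Matrix.vecMulVec_apply, Pi.star_apply, RCLike.star_def, smul_eq_mul, map_sum, map_mul,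
      Complex.conj_conj]
    rw [Finset.sum_comm]
    refine Finset.sum_congr rfl fun k _ => Finset.sum_congr rfl fun l _ => ?_
    have hadd : l + k + 1 = k + l + 1 := by omega
    rw [hadd]
    ring
  · -- PD U PD = U
    rw [hU, Matrix.mul_sum, Matrix.sum_mul]
    refine Finset.sum_congr rfl fun k _ => ?_
    rw [Matrix.mul_sum, Matrix.sum_mul]
    refine Finset.sum_congr rfl fun l _ => ?_
    rw [Matrix.mul_smul, Matrix.smul_mul]
    congr 1
    rw [mul_vecMulVec', PD_mulVec_Rtilde, vecMulVec_mul', star_Rtilde, Rtilde_vecMul_PD,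
      ← star_Rtilde]
  · -- positivity
    rintro σ ⟨ξ, hξnorm, hσ, hsym⟩
    have hkl : ∀ k l : ℕ, k < n2 + 1 → l < n2 + 1 → k + l + 1 ≤ N * (d - 1) := by
      intro k l hk hl; omega
    have htr : (U * σ).trace = ∑ k ∈ Finset.range (n2 + 1), ∑ l ∈ Finset.range (n2 + 1),
        t k * conj (t l) * (bVal d N ξ (k + l + 1) * conj (bVal d N ξ (k + l + 1))) := by
      rw [hU, Matrix.sum_mul, Matrix.trace_sum]
      refine Finset.sum_congr rfl fun k _ => ?_
      rw [Matrix.sum_mul, Matrix.trace_sum]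
      refine Finset.sum_congr rfl fun l _ => ?_
      rw [Matrix.smul_mul, Matrix.trace_smul, hσ, trace_term, smul_eq_mul]
    have hkey : ∀ i : Idx d N, bVal d N ξ (wsum i) * conj (bVal d N ξ (wsum i))
        = ((∏ r, Complex.normSq (ξ (i r)) : ℝ) : ℂ) := by
      intro i
      have h2 : prodProj (fun _ : Fin N => ξ) i i
          = (PD d N * prodProj (fun _ : Fin N => ξ) * PD d N) i i := by
        conv_lhs => rw [← hσ]
        conv_rhs => rw [← hσ]
        exact congrFun (congrFun hsym i) i
      rw [prodProj_apply_eq, PD_mul_sigma_mul_PD] at h2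
      rw [← h2, Complex.mul_conj]
      norm_cast
      exact map_prod Complex.normSq _ _
    by_cases hz : ξ ⟨0, hd0⟩ = 0
    · -- degenerate case: support is {d-1}
      have hzero : ∀ n, ∀ hn : n < d, n < d - 1 → Complex.normSq (ξ ⟨n, hn⟩) = 0 := by
        intro n
        induction n with
        | zero => intro hn _; simp [hz, Fin.mk_zero]
          -- fix: ⟨0, hn⟩ = ⟨0, hd0⟩
        | succ n ih =>
          intro hn hlt
          have hn' : n < d := by omega
          have hn2d : n + 2 < d := by omega
          have e1 := hkey (trip (N := N) (⟨n, hn'⟩ : Fin d) ⟨n + 2, hn2d⟩ ⟨n + 1, hn⟩)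
          have e2 := hkey (trip (N := N) (⟨n + 1, hn⟩ : Fin d) ⟨n + 1, hn⟩ ⟨n + 1, hn⟩)
          have w1 : wsum (trip (N := N) (⟨n, hn'⟩ : Fin d) ⟨n + 2, hn2d⟩ ⟨n + 1, hn⟩)
              = wsum (trip (N := N) (⟨n + 1, hn⟩ : Fin d) ⟨n + 1, hn⟩ ⟨n + 1, hn⟩) := by
            show (∑ j, _) = (∑ j, _)
            rw [trip_wsum hN, trip_wsum hN]
            simp only [Fin.val_mk]
            omega
          rw [w1] at e1
          have e3 := e1.symm.trans e2
          have e4 : (∏ r, Complex.normSq (ξ (trip (N := N) (⟨n, hn'⟩ : Fin d) ⟨n + 2, hn2d⟩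
                ⟨n + 1, hn⟩ r)))
              = ∏ r, Complex.normSq (ξ (trip (N := N) (⟨n + 1, hn⟩ : Fin d) ⟨n + 1, hn⟩
                ⟨n + 1, hn⟩ r)) := by
            exact_mod_cast e3
          rw [trip_spec hN _ _ _ (fun x => Complex.normSq (ξ x)),
            trip_spec hN _ _ _ (fun x => Complex.normSq (ξ x))] at e4
          have hIH : Complex.normSq (ξ ⟨n, hn'⟩) = 0 := ih hn' (by omega)
          rw [hIH] at e4
          simp only [zero_mul] at e4
          have epow : Complex.normSq (ξ ⟨n + 1, hn⟩) ^ N = 0 := by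
            have : Complex.normSq (ξ ⟨n + 1, hn⟩) * Complex.normSq (ξ ⟨n + 1, hn⟩) *
                Complex.normSq (ξ ⟨n + 1, hn⟩) ^ (N - 2)
                = Complex.normSq (ξ ⟨n + 1, hn⟩) ^ N := by
              rw [← pow_two, ← pow_add]
              congr 1
              omega
            rw [← this, ← e4]
          have := pow_eq_zero_iff (n := N) (by omega) |>.mp epow
          exact this
      rw [htr]
      refine Finset.sum_nonneg fun k hk => Finset.sum_nonneg fun l hl => ?_
      simp only [Finset.mem_range] at hk hl
      by_cases hm : k + l + 1 = N * (d - 1)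
      · obtain rfl : l = k := by omega
        rw [Complex.mul_conj, Complex.mul_conj, ← Complex.ofReal_mul]
        rw [Complex.zero_le_real]
        exact mul_nonneg (Complex.normSq_nonneg _) (Complex.normSq_nonneg _)
      · -- B(k+l+1) = 0
        obtain ⟨i, hi⟩ := exists_rep d hd1 N (k + l + 1) (hkl k l hk hl)
        have hwi : wsum i = k + l + 1 := hi
        have hB := hkey i
        rw [hwi] at hB
        have hex : ∃ r0 : Fin N, ((i r0 : ℕ)) ≠ d - 1 := by
          by_contra hcon
          push_neg at hcon
          have : wsum i = N * (d - 1) := by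
            rw [wsum, Finset.sum_congr rfl (fun j _ => hcon j), Finset.sum_const,
              Finset.card_univ, Fintype.card_fin, smul_eq_mul]
          rw [hwi] at this
          exact hm this
        obtain ⟨r0, hr0⟩ := hex
        have hlt : ((i r0 : ℕ)) < d - 1 := by
          have := (i r0).isLt
          omega
        have hz0 : Complex.normSq (ξ (i r0)) = 0 := by
          have := hzero (i r0) (i r0).isLt hlt
          rwa [Fin.eta] at this
        have : (∏ r, Complex.normSq (ξ (i r))) = 0 :=
          Finset.prod_eq_zero (Finset.mem_univ r0) hz0
        rw [hB, this]
        simp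
    · -- generic case: geometric
      set u0 : ℝ := Complex.normSq (ξ ⟨0, hd0⟩) with hu0def
      have hu0 : u0 ≠ 0 := by
        simp only [hu0def, ne_eq, Complex.normSq_eq_zero]
        exact hz
      have hd1' : 1 < d := by omega
      set rr : ℝ := Complex.normSq (ξ ⟨1, hd1'⟩) / u0 with hrrdef
      have hgeo : ∀ n, ∀ hn : n < d, Complex.normSq (ξ ⟨n, hn⟩) = u0 * rr ^ n := by
        intro n
        induction n with
        | zero => intro hn; simp [hu0def]
        | succ n ih =>
          intro hn
          have hn' : n < d := by omega
          have e1 := hkey (trip (N := N) (⟨n + 1, hn⟩ : Fin d) ⟨0, hd0⟩ ⟨0, hd0⟩)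
          have e2 := hkey (trip (N := N) (⟨n, hn'⟩ : Fin d) ⟨1, hd1'⟩ ⟨0, hd0⟩)
          have w1 : wsum (trip (N := N) (⟨n + 1, hn⟩ : Fin d) ⟨0, hd0⟩ ⟨0, hd0⟩)
              = wsum (trip (N := N) (⟨n, hn'⟩ : Fin d) ⟨1, hd1'⟩ ⟨0, hd0⟩) := by
            show (∑ j, _) = (∑ j, _)
            rw [trip_wsum hN, trip_wsum hN]
            all_goals simp only [Fin.val_mk]
            all_goals omega
          rw [w1] at e1
          have e3 := e1.symm.trans e2
          have e4 : (∏ r, Complex.normSq (ξ (trip (N := N) (⟨n + 1, hn⟩ : Fin d) ⟨0, hd0⟩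
                ⟨0, hd0⟩ r)))
              = ∏ r, Complex.normSq (ξ (trip (N := N) (⟨n, hn'⟩ : Fin d) ⟨1, hd1'⟩
                ⟨0, hd0⟩ r)) := by
            exact_mod_cast e3
          rw [trip_spec hN _ _ _ (fun x => Complex.normSq (ξ x)),
            trip_spec hN _ _ _ (fun x => Complex.normSq (ξ x))] at e4
          have hIH : Complex.normSq (ξ ⟨n, hn'⟩) = u0 * rr ^ n := ih hn'
          have hu1 : Complex.normSq (ξ ⟨1, hd1'⟩) = rr * u0 := by
            rw [hrrdef]; field_simp
          rw [hIH, hu1, ← hu0def] at e4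
          have hcan : u0 * u0 ^ (N - 2) ≠ 0 := mul_ne_zero hu0 (pow_ne_zero _ hu0)
          have : Complex.normSq (ξ ⟨n + 1, hn⟩) * (u0 * u0 ^ (N - 2))
              = (u0 * rr ^ (n + 1)) * (u0 * u0 ^ (N - 2)) := by
            calc Complex.normSq (ξ ⟨n + 1, hn⟩) * (u0 * u0 ^ (N - 2))
                = Complex.normSq (ξ ⟨n + 1, hn⟩) * u0 * u0 ^ (N - 2) := by ring
              _ = u0 * rr ^ n * (rr * u0) * u0 ^ (N - 2) := e4
              _ = (u0 * rr ^ (n + 1)) * (u0 * u0 ^ (N - 2)) := by ring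
          exact mul_right_cancel₀ hcan this
      have hgeo' : ∀ x : Fin d, Complex.normSq (ξ x) = u0 * rr ^ (x : ℕ) := by
        intro x
        have := hgeo x x.isLt
        rwa [Fin.eta] at this
      have hBA : ∀ m, m ≤ N * (d - 1) →
          bVal d N ξ m * conj (bVal d N ξ m) = ((u0 ^ N * rr ^ m : ℝ) : ℂ) := by
        intro m hm
        obtain ⟨i, hi⟩ := exists_rep d hd1 N m hm
        have hwi : wsum i = m := hi
        have hB := hkey i
        rw [hwi] at hB
        rw [hB]
        congr 1
        calc (∏ r, Complex.normSq (ξ (i r))) = ∏ r, (u0 * rr ^ ((i r : ℕ))) := by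
              exact Finset.prod_congr rfl fun r _ => hgeo' (i r)
          _ = (∏ _r : Fin N, u0) * ∏ r, rr ^ ((i r : ℕ)) := Finset.prod_mul_distrib
          _ = u0 ^ N * rr ^ m := by
              rw [Finset.prod_const, Finset.card_univ, Fintype.card_fin,
                Finset.prod_pow_eq_pow_sum, hi]
      rw [htr]
      have hrr0 : 0 ≤ rr := div_nonneg (Complex.normSq_nonneg _) (Complex.normSq_nonneg _)
      have factored : (∑ k ∈ Finset.range (n2 + 1), ∑ l ∈ Finset.range (n2 + 1),
          t k * conj (t l) * (bVal d N ξ (k + l + 1) * conj (bVal d N ξ (k + l + 1))))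
          = ((u0 ^ N * rr : ℝ) : ℂ) *
            ((∑ k ∈ Finset.range (n2 + 1), t k * ((rr : ℂ)) ^ k) *
              conj (∑ k ∈ Finset.range (n2 + 1), t k * ((rr : ℂ)) ^ k)) := by
        rw [map_sum, Finset.sum_mul_sum]
        rw [Finset.mul_sum]
        refine Finset.sum_congr rfl fun k hk => ?_
        rw [Finset.mul_sum]
        refine Finset.sum_congr rfl fun l hl => ?_
        simp only [Finset.mem_range] at hk hl
        rw [hBA (k + l + 1) (hkl k l hk hl)]
        rw [map_mul, map_pow, Complex.conj_ofReal]
        push_cast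
        ring
      rw [factored, Complex.mul_conj, ← Complex.ofReal_mul, Complex.zero_le_real]
      exact mul_nonneg (mul_nonneg (pow_nonneg (Complex.normSq_nonneg _) _) hrr0)
        (Complex.normSq_nonneg _)


end DSym
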